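/- Let k ≥ 1 and suppose b_0, ..., b_{2k+1} ∈ C^2 are unit vectors with pairwise distinct orthogonal-complement lines, and let b_j^⊥ denote a unit vector orthogonal to b_j. Define for 0 ≤ j ≤ k: v_{2j} = b_j ⊗ b_{2j}^⊥, v_{2j+1} = b_j^⊥ ⊗ b_{(2j+2) mod (2k+2)}, w_{2j} = b_j^⊥ ⊗ b_{2j+1}^⊥, w_{2j+1} = b_j ⊗ b_{(2j+3) mod (2k+2)}. Assume additionally that |⟨b_i, b_j⟩|, |⟨b_i, b_j^⊥⟩|, |⟨b_i^⊥, b_j^⊥⟩| are not in {0, 1} for i ≠ j. Then the orthogonality graph of {v_0, ..., v_{2k+1}, w_0, ..., w_{2k+1}} ⊆ C^2 ⊗ C^2 is exactly the prism graph Y_{4k+4}: v_i ⊥ v_j and w_i ⊥ w_j iff j - i ≡ ±1 (mod 2k+2), and v_i ⊥ w_j iff i = j. -/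

import Mathlib

/-- The tensor product of two vectors of `ℂ²`, realized in
`EuclideanSpace ℂ (Fin 2 × Fin 2) ≅ ℂ² ⊗ ℂ²`. -/
noncomputable def tens2 (a b : EuclideanSpace ℂ (Fin 2)) :
    EuclideanSpace ℂ (Fin 2 × Fin 2) :=
  WithLp.toLp 2 (fun x : Fin 2 × Fin 2 => a x.1 * b x.2)

lemma inner_tens2 (a b c d : EuclideanSpace ℂ (Fin 2)) :
    (inner ℂ (tens2 a b) (tens2 c d) : ℂ) = (inner ℂ a c : ℂ) * inner ℂ b d := by
  simp only [tens2, PiLp.inner_apply, PiLp.toLp_apply, RCLike.inner_apply, map_mul, Fintype.sum_prod_type]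
  rw [Finset.sum_mul_sum]
  exact Finset.sum_congr rfl fun i _ => Finset.sum_congr rfl fun j _ => by ring

lemma modIff (n a c : ℕ) (hn : 2 ≤ n) (ha : a < n) (hc : c < n) :
    ((c + n - a) % n = 1 ↔ (c = a + 1 ∨ c + n = a + 1)) := by
  rcases le_or_gt a c with h | h
  · have h2 : c + n - a = (c - a) + n := by omega
    rw [h2, Nat.add_mod_right, Nat.mod_eq_of_lt (show c - a < n by omega)]
    omega
  · rw [Nat.mod_eq_of_lt (show c + n - a < n by omega)]
    omega

theorem stmt11 (k : ℕ) (hk : 1 ≤ k)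
    (b bp : Fin (2 * k + 2) → EuclideanSpace ℂ (Fin 2))
    (hbnorm : ∀ j, ‖b j‖ = 1) (hbpnorm : ∀ j, ‖bp j‖ = 1)
    (hperp : ∀ j, (inner ℂ (b j) (bp j) : ℂ) = 0)
    (hdist : ∀ i j, i ≠ j →
      ‖(inner ℂ (b i) (b j) : ℂ)‖ ∉ ({0, 1} : Set ℝ) ∧
      ‖(inner ℂ (b i) (bp j) : ℂ)‖ ∉ ({0, 1} : Set ℝ) ∧
      ‖(inner ℂ (bp i) (bp j) : ℂ)‖ ∉ ({0, 1} : Set ℝ))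
    (v w : Fin (2 * k + 2) → EuclideanSpace ℂ (Fin 2 × Fin 2))
    (hv0 : ∀ j : ℕ, ∀ hj : j ≤ k, v ⟨2 * j, by omega⟩ =
      tens2 (b ⟨j, by omega⟩) (bp ⟨2 * j, by omega⟩))
    (hv1 : ∀ j : ℕ, ∀ hj : j ≤ k, v ⟨2 * j + 1, by omega⟩ =
      tens2 (bp ⟨j, by omega⟩)
        (b ⟨(2 * j + 2) % (2 * k + 2), Nat.mod_lt _ (by omega)⟩))
    (hw0 : ∀ j : ℕ, ∀ hj : j ≤ k, w ⟨2 * j, by omega⟩ =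
      tens2 (bp ⟨j, by omega⟩) (bp ⟨2 * j + 1, by omega⟩))
    (hw1 : ∀ j : ℕ, ∀ hj : j ≤ k, w ⟨2 * j + 1, by omega⟩ =
      tens2 (b ⟨j, by omega⟩)
        (b ⟨(2 * j + 3) % (2 * k + 2), Nat.mod_lt _ (by omega)⟩)) :
    (∀ i j : Fin (2 * k + 2),
      ((inner ℂ (v i) (v j) : ℂ) = 0 ↔
        (j.val + (2 * k + 2) - i.val) % (2 * k + 2) = 1 ∨
        (i.val + (2 * k + 2) - j.val) % (2 * k + 2) = 1)) ∧
    (∀ i j : Fin (2 * k + 2),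
      ((inner ℂ (w i) (w j) : ℂ) = 0 ↔
        (j.val + (2 * k + 2) - i.val) % (2 * k + 2) = 1 ∨
        (i.val + (2 * k + 2) - j.val) % (2 * k + 2) = 1)) ∧
    (∀ i j : Fin (2 * k + 2), ((inner ℂ (v i) (w j) : ℂ) = 0 ↔ i = j)) := by
  have hn2 : 2 ≤ 2 * k + 2 := by omega
  have vmk : ∀ (x : ℕ) (h : x < 2 * k + 2), ((⟨x, h⟩ : Fin (2 * k + 2)) : ℕ) = x :=
    fun _ _ => rfl
  have hbne : ∀ i, b i ≠ 0 := fun i h => by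
    have := hbnorm i; rw [h] at this; simp at this
  have hpne : ∀ i, bp i ≠ 0 := fun i h => by
    have := hbpnorm i; rw [h] at this; simp at this
  have Hbb : ∀ i j : Fin (2 * k + 2), ((inner ℂ (b i) (b j) : ℂ) = 0 ↔ False) := by
    intro i j
    simp only [iff_false]
    by_cases h : i = j
    · subst h; exact inner_self_ne_zero.mpr (hbne i)
    · intro h0; exact (hdist i j h).1 (by simp [h0])
  have Hpp : ∀ i j : Fin (2 * k + 2), ((inner ℂ (bp i) (bp j) : ℂ) = 0 ↔ False) := by
    intro i j
    simp only [iff_false]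
    by_cases h : i = j
    · subst h; exact inner_self_ne_zero.mpr (hpne i)
    · intro h0; exact (hdist i j h).2.2 (by simp [h0])
  have Hbp : ∀ i j : Fin (2 * k + 2), ((inner ℂ (b i) (bp j) : ℂ) = 0 ↔ i = j) := by
    intro i j
    constructor
    · intro h0
      by_contra h
      exact (hdist i j h).2.1 (by simp [h0])
    · rintro rfl; exact hperp i
  have Hpb : ∀ i j : Fin (2 * k + 2), ((inner ℂ (bp i) (b j) : ℂ) = 0 ↔ i = j) := by
    intro i j
    rw [← inner_conj_symm, map_eq_zero, Hbp j i, eq_comm]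
  have e1 : ∀ c : ℕ, c ≤ k →
      ((2 * c + 2) % (2 * k + 2) = 2 * c + 2 ∧ c < k) ∨
      ((2 * c + 2) % (2 * k + 2) = 0 ∧ c = k) := by
    intro c hc
    rcases Nat.lt_or_ge c k with h | h
    · exact Or.inl ⟨Nat.mod_eq_of_lt (by omega), h⟩
    · have hck : c = k := by omega
      refine Or.inr ⟨?_, hck⟩
      rw [hck]
      exact Nat.mod_self _
  have e2 : ∀ c : ℕ, c ≤ k →
      ((2 * c + 3) % (2 * k + 2) = 2 * c + 3 ∧ c < k) ∨
      ((2 * c + 3) % (2 * k + 2) = 1 ∧ c = k) := by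
    intro c hc
    rcases Nat.lt_or_ge c k with h | h
    · exact Or.inl ⟨Nat.mod_eq_of_lt (by omega), h⟩
    · have hck : c = k := by omega
      refine Or.inr ⟨?_, hck⟩
      rw [hck]
      have h3 : 2 * k + 3 = 1 + (2 * k + 2) := by omega
      rw [h3, Nat.add_mod_right, Nat.mod_eq_of_lt (show 1 < 2 * k + 2 by omega)]
  refine ⟨?_, ?_, ?_⟩
  · intro i j
    obtain ⟨iv, hilt⟩ := i
    obtain ⟨jv, hjlt⟩ := j
    rcases Nat.even_or_odd iv with ⟨a, ha2⟩ | ⟨a, ha2⟩ <;>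
      rcases Nat.even_or_odd jv with ⟨c, hc2⟩ | ⟨c, hc2⟩
    · have hak : a ≤ k := by omega
      have hae : iv = 2 * a := by omega
      subst hae
      have hck : c ≤ k := by omega
      have hce : jv = 2 * c := by omega
      subst hce
      rw [hv0 a hak, hv0 c hck, inner_tens2]
      simp only [mul_eq_zero, Hbb, Hpp, Hbp, Hpb, Fin.mk.injEq, vmk, false_or,
        or_false, or_self, false_iff]
      rw [modIff (2 * k + 2) (2 * a) (2 * c) hn2 (by omega) (by omega),
        modIff (2 * k + 2) (2 * c) (2 * a) hn2 (by omega) (by omega)]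
      have := e1 a hak
      have := e1 c hck
      have := e2 a hak
      have := e2 c hck
      omega
    · have hak : a ≤ k := by omega
      have hae : iv = 2 * a := by omega
      subst hae
      have hck : c ≤ k := by omega
      have hce : jv = 2 * c + 1 := by omega
      subst hce
      rw [hv0 a hak, hv1 c hck, inner_tens2]
      simp only [mul_eq_zero, Hbb, Hpp, Hbp, Hpb, Fin.mk.injEq, vmk, false_or,
        or_false, or_self, false_iff]
      rw [modIff (2 * k + 2) (2 * a) (2 * c + 1) hn2 (by omega) (by omega),
        modIff (2 * k + 2) (2 * c + 1) (2 * a) hn2 (by omega) (by omega)]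
      have := e1 a hak
      have := e1 c hck
      have := e2 a hak
      have := e2 c hck
      omega
    · have hak : a ≤ k := by omega
      have hae : iv = 2 * a + 1 := by omega
      subst hae
      have hck : c ≤ k := by omega
      have hce : jv = 2 * c := by omega
      subst hce
      rw [hv1 a hak, hv0 c hck, inner_tens2]
      simp only [mul_eq_zero, Hbb, Hpp, Hbp, Hpb, Fin.mk.injEq, vmk, false_or,
        or_false, or_self, false_iff]
      rw [modIff (2 * k + 2) (2 * a + 1) (2 * c) hn2 (by omega) (by omega),
        modIff (2 * k + 2) (2 * c) (2 * a + 1) hn2 (by omega) (by omega)]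
      have := e1 a hak
      have := e1 c hck
      have := e2 a hak
      have := e2 c hck
      omega
    · have hak : a ≤ k := by omega
      have hae : iv = 2 * a + 1 := by omega
      subst hae
      have hck : c ≤ k := by omega
      have hce : jv = 2 * c + 1 := by omega
      subst hce
      rw [hv1 a hak, hv1 c hck, inner_tens2]
      simp only [mul_eq_zero, Hbb, Hpp, Hbp, Hpb, Fin.mk.injEq, vmk, false_or,
        or_false, or_self, false_iff]
      rw [modIff (2 * k + 2) (2 * a + 1) (2 * c + 1) hn2 (by omega) (by omega),
        modIff (2 * k + 2) (2 * c + 1) (2 * a + 1) hn2 (by omega) (by omega)]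
      have := e1 a hak
      have := e1 c hck
      have := e2 a hak
      have := e2 c hck
      omega
  · intro i j
    obtain ⟨iv, hilt⟩ := i
    obtain ⟨jv, hjlt⟩ := j
    rcases Nat.even_or_odd iv with ⟨a, ha2⟩ | ⟨a, ha2⟩ <;>
      rcases Nat.even_or_odd jv with ⟨c, hc2⟩ | ⟨c, hc2⟩
    · have hak : a ≤ k := by omega
      have hae : iv = 2 * a := by omega
      subst hae
      have hck : c ≤ k := by omega
      have hce : jv = 2 * c := by omega
      subst hce
      rw [hw0 a hak, hw0 c hck, inner_tens2]
      simp only [mul_eq_zero, Hbb, Hpp, Hbp, Hpb, Fin.mk.injEq, vmk, false_or,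
        or_false, or_self, false_iff]
      rw [modIff (2 * k + 2) (2 * a) (2 * c) hn2 (by omega) (by omega),
        modIff (2 * k + 2) (2 * c) (2 * a) hn2 (by omega) (by omega)]
      have := e1 a hak
      have := e1 c hck
      have := e2 a hak
      have := e2 c hck
      omega
    · have hak : a ≤ k := by omega
      have hae : iv = 2 * a := by omega
      subst hae
      have hck : c ≤ k := by omega
      have hce : jv = 2 * c + 1 := by omega
      subst hce
      rw [hw0 a hak, hw1 c hck, inner_tens2]
      simp only [mul_eq_zero, Hbb, Hpp, Hbp, Hpb, Fin.mk.injEq, vmk, false_or,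
        or_false, or_self, false_iff]
      rw [modIff (2 * k + 2) (2 * a) (2 * c + 1) hn2 (by omega) (by omega),
        modIff (2 * k + 2) (2 * c + 1) (2 * a) hn2 (by omega) (by omega)]
      have := e1 a hak
      have := e1 c hck
      have := e2 a hak
      have := e2 c hck
      omega
    · have hak : a ≤ k := by omega
      have hae : iv = 2 * a + 1 := by omega
      subst hae
      have hck : c ≤ k := by omega
      have hce : jv = 2 * c := by omega
      subst hce
      rw [hw1 a hak, hw0 c hck, inner_tens2]
      simp only [mul_eq_zero, Hbb, Hpp, Hbp, Hpb, Fin.mk.injEq, vmk, false_or,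
        or_false, or_self, false_iff]
      rw [modIff (2 * k + 2) (2 * a + 1) (2 * c) hn2 (by omega) (by omega),
        modIff (2 * k + 2) (2 * c) (2 * a + 1) hn2 (by omega) (by omega)]
      have := e1 a hak
      have := e1 c hck
      have := e2 a hak
      have := e2 c hck
      omega
    · have hak : a ≤ k := by omega
      have hae : iv = 2 * a + 1 := by omega
      subst hae
      have hck : c ≤ k := by omega
      have hce : jv = 2 * c + 1 := by omega
      subst hce
      rw [hw1 a hak, hw1 c hck, inner_tens2]
      simp only [mul_eq_zero, Hbb, Hpp, Hbp, Hpb, Fin.mk.injEq, vmk, false_or,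
        or_false, or_self, false_iff]
      rw [modIff (2 * k + 2) (2 * a + 1) (2 * c + 1) hn2 (by omega) (by omega),
        modIff (2 * k + 2) (2 * c + 1) (2 * a + 1) hn2 (by omega) (by omega)]
      have := e1 a hak
      have := e1 c hck
      have := e2 a hak
      have := e2 c hck
      omega
  · intro i j
    obtain ⟨iv, hilt⟩ := i
    obtain ⟨jv, hjlt⟩ := j
    rcases Nat.even_or_odd iv with ⟨a, ha2⟩ | ⟨a, ha2⟩ <;>
      rcases Nat.even_or_odd jv with ⟨c, hc2⟩ | ⟨c, hc2⟩
    · have hak : a ≤ k := by omega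
      have hae : iv = 2 * a := by omega
      subst hae
      have hck : c ≤ k := by omega
      have hce : jv = 2 * c := by omega
      subst hce
      rw [hv0 a hak, hw0 c hck, inner_tens2]
      rw [Fin.ext_iff]
      simp only [mul_eq_zero, Hbb, Hpp, Hbp, Hpb, Fin.mk.injEq, vmk, false_or,
        or_false, or_self, false_iff]
      have := e1 a hak
      have := e1 c hck
      have := e2 a hak
      have := e2 c hck
      omega
    · have hak : a ≤ k := by omega
      have hae : iv = 2 * a := by omega
      subst hae
      have hck : c ≤ k := by omega
      have hce : jv = 2 * c + 1 := by omega
      subst hce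
      rw [hv0 a hak, hw1 c hck, inner_tens2]
      rw [Fin.ext_iff]
      simp only [mul_eq_zero, Hbb, Hpp, Hbp, Hpb, Fin.mk.injEq, vmk, false_or,
        or_false, or_self, false_iff]
      have := e1 a hak
      have := e1 c hck
      have := e2 a hak
      have := e2 c hck
      omega
    · have hak : a ≤ k := by omega
      have hae : iv = 2 * a + 1 := by omega
      subst hae
      have hck : c ≤ k := by omega
      have hce : jv = 2 * c := by omega
      subst hce
      rw [hv1 a hak, hw0 c hck, inner_tens2]
      rw [Fin.ext_iff]
      simp only [mul_eq_zero, Hbb, Hpp, Hbp, Hpb, Fin.mk.injEq, vmk, false_or,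
        or_false, or_self, false_iff]
      have := e1 a hak
      have := e1 c hck
      have := e2 a hak
      have := e2 c hck
      omega
    · have hak : a ≤ k := by omega
      have hae : iv = 2 * a + 1 := by omega
      subst hae
      have hck : c ≤ k := by omega
      have hce : jv = 2 * c + 1 := by omega
      subst hce
      rw [hv1 a hak, hw1 c hck, inner_tens2]
      rw [Fin.ext_iff]
      simp only [mul_eq_zero, Hbb, Hpp, Hbp, Hpb, Fin.mk.injEq, vmk, false_or,
        or_false, or_self, false_iff]
      have := e1 a hak
      have := e1 c hck
      have := e2 a hak
      have := e2 c hck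
      omega
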